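/- Let b : ℕ → ℝ be a nonnegative sequence satisfying, for all sufficiently large n, b(n) ≤ sum over k from ⌈log2 n⌉ to n - ⌈log2 n⌉ of b(k)*b(n-k-1), together with b(n) ≤ 2.9^n/n^2 for all n up to some explicit initial threshold N0. Then b(n) ≤ 2.9^n/n^2 for all n ≥ 1. -/

import Mathlib

open Finset

/-- Telescoping tail bound for the sum of 1/k^2. -/
lemma sum_inv_sq_key (L : ℕ) (hL : 2 ≤ L) (M : ℕ) (hM : L - 1 ≤ M) :
    (∑ k ∈ Icc L M, (1:ℝ) / (k:ℝ)^2) ≤ 1/((L:ℝ)-1) - 1/(M:ℝ) := by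
  induction M, hM using Nat.le_induction with
  | base =>
      rw [show Icc L (L-1) = ∅ from Icc_eq_empty (by omega)]
      have : ((L - 1 : ℕ) : ℝ) = (L:ℝ) - 1 := by
        rw [Nat.cast_sub (by omega), Nat.cast_one]
      simp [this]
  | succ M hM ih =>
      rw [Finset.sum_Icc_succ_top (by omega)]
      have hM0 : (1:ℝ) ≤ (M:ℝ) := by exact_mod_cast (by omega : 1 ≤ M)
      have hMpos : (0:ℝ) < M := by linarith
      have hM1pos : (0:ℝ) < (M:ℝ) + 1 := by linarith
      have hstep : (1:ℝ)/((M:ℝ)+1)^2 ≤ 1/(M:ℝ) - 1/((M:ℝ)+1) := by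
        rw [div_sub_div _ _ (ne_of_gt hMpos) (ne_of_gt hM1pos)]
        rw [div_le_div_iff₀ (by positivity) (by positivity)]
        ring_nf
        nlinarith
      push_cast
      linarith

lemma sum_inv_sq_le (L : ℕ) (hL : 2 ≤ L) (M : ℕ) :
    (∑ k ∈ Icc L M, (1:ℝ) / (k:ℝ)^2) ≤ 1/((L:ℝ)-1) := by
  have hLpos : (0:ℝ) < (L:ℝ) - 1 := by
    have : (2:ℝ) ≤ L := by exact_mod_cast hL
    linarith
  by_cases h : L - 1 ≤ M
  · have := sum_inv_sq_key L hL M h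
    have hMpos : (0:ℝ) < (M:ℝ) := by
      have : 1 ≤ M := by omega
      exact_mod_cast this
    have : (0:ℝ) ≤ 1/(M:ℝ) := by positivity
    linarith [sum_inv_sq_key L hL M h]
  · rw [show Icc L M = ∅ from Icc_eq_empty (by omega)]
    simp only [Finset.sum_empty]
    exact le_of_lt (one_div_pos.mpr hLpos)

lemma aux_frac (a c : ℝ) (ha : 0 < a) (hc : 0 < c) :
    1/(a^2*c^2) ≤ 4/(a+c)^2 * (1/a^2 + 1/c^2) := by
  rw [div_add_div _ _ (by positivity) (by positivity), div_mul_div_comm,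
    div_le_div_iff₀ (by positivity) (by positivity)]
  nlinarith [sq_nonneg (a-c), sq_nonneg (a*c), mul_pos ha hc, sq_nonneg (a+c)]

theorem balanced_count_bound :
    ∃ N0 : ℕ, ∀ b : ℕ → ℝ, (∀ n, 0 ≤ b n) →
      (∀ n, N0 < n →
        b n ≤ ∑ k ∈ Finset.Icc (Nat.clog 2 n) (n - Nat.clog 2 n), b k * b (n - k - 1)) →
      (∀ n, 1 ≤ n → n ≤ N0 → b n ≤ (2.9 : ℝ)^n / n^2) →
      ∀ n, 1 ≤ n → b n ≤ (2.9 : ℝ)^n / n^2 := by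
  refine ⟨1024, ?_⟩
  intro b hb hrec hbase n
  induction n using Nat.strong_induction_on with
  | _ n ih =>
  intro hn
  by_cases hsmall : n ≤ 1024
  · exact hbase n hn hsmall
  push_neg at hsmall
  set L := Nat.clog 2 n with hLdef
  have hL11 : 11 ≤ L := by
    by_contra h
    push_neg at h
    have : n ≤ 2 ^ 10 := (Nat.clog_le_iff_le_pow (by norm_num)).1 (by omega)
    omega
  have hLn : L ≤ n := by
    exact (Nat.clog_le_iff_le_pow (b := 2) one_lt_two).2 (le_of_lt (Nat.lt_two_pow_self))
  -- real versions
  have hnR : (1025:ℝ) ≤ (n:ℝ) := by exact_mod_cast hsmall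
  have hLR : (11:ℝ) ≤ (L:ℝ) := by exact_mod_cast hL11
  -- the pointwise bound
  have hterm : ∀ k ∈ Icc L (n - L), b k * b (n - k - 1) ≤
      ((2.9:ℝ)^(n-1) * (4/((n:ℝ)-1)^2)) * ((1:ℝ)/(k:ℝ)^2 + (1:ℝ)/((n-k-1:ℕ):ℝ)^2) := by
    intro k hk
    rw [mem_Icc] at hk
    have hk1 : 1 ≤ k := by omega
    have hc1 : 1 ≤ n - k - 1 := by omega
    have hklt : k < n := by omega
    have hclt : n - k - 1 < n := by omega
    have h1 := ih k hklt hk1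
    have h2 := ih (n - k - 1) hclt hc1
    have hkR : (1:ℝ) ≤ (k:ℝ) := by exact_mod_cast hk1
    have hcR : ((n - k - 1 : ℕ) : ℝ) = (n:ℝ) - (k:ℝ) - 1 := by
      rw [Nat.sub_sub, Nat.cast_sub (by omega)]
      push_cast
      ring
    have hcpos : (0:ℝ) < ((n - k - 1 : ℕ) : ℝ) := by
      rw [hcR]; have : (k:ℝ) + 2 ≤ (n:ℝ) := by exact_mod_cast (by omega : k + 2 ≤ n)
      linarith
    have hkpos : (0:ℝ) < (k:ℝ) := by linarith
    calc b k * b (n - k - 1)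
        ≤ ((2.9:ℝ)^k / (k:ℝ)^2) * ((2.9:ℝ)^(n-k-1) / ((n-k-1:ℕ):ℝ)^2) := by
          apply mul_le_mul h1 h2 (hb _) (by positivity)
      _ = (2.9:ℝ)^(n-1) * (1 / ((k:ℝ)^2 * ((n-k-1:ℕ):ℝ)^2)) := by
          rw [div_mul_div_comm, ← pow_add]
          rw [show k + (n - k - 1) = n - 1 from by omega]
          ring
      _ ≤ ((2.9:ℝ)^(n-1) * (4/((n:ℝ)-1)^2)) * ((1:ℝ)/(k:ℝ)^2 + (1:ℝ)/((n-k-1:ℕ):ℝ)^2) := by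
          have hsum : (k:ℝ) + ((n-k-1:ℕ):ℝ) = (n:ℝ) - 1 := by rw [hcR]; ring
          have := aux_frac (k:ℝ) ((n-k-1:ℕ):ℝ) hkpos hcpos
          rw [hsum] at this
          have hpow : (0:ℝ) ≤ (2.9:ℝ)^(n-1) := by positivity
          calc (2.9:ℝ)^(n-1) * (1 / ((k:ℝ)^2 * ((n-k-1:ℕ):ℝ)^2))
              ≤ (2.9:ℝ)^(n-1) * (4/((n:ℝ)-1)^2 * ((1:ℝ)/(k:ℝ)^2 + (1:ℝ)/((n-k-1:ℕ):ℝ)^2)) :=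
                mul_le_mul_of_nonneg_left this hpow
            _ = ((2.9:ℝ)^(n-1) * (4/((n:ℝ)-1)^2)) * ((1:ℝ)/(k:ℝ)^2 + (1:ℝ)/((n-k-1:ℕ):ℝ)^2) := by
                ring
  -- sums
  have hS1 : (∑ k ∈ Icc L (n-L), (1:ℝ)/(k:ℝ)^2) ≤ 1/((L:ℝ)-1) :=
    sum_inv_sq_le L (by omega) (n-L)
  have hS2eq : (∑ k ∈ Icc L (n-L), (1:ℝ)/((n-k-1:ℕ):ℝ)^2)
      = ∑ j ∈ Icc (L-1) (n-1-L), (1:ℝ)/(j:ℝ)^2 := by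
    apply Finset.sum_nbij' (fun k => n - k - 1) (fun j => n - j - 1)
    · intro a ha; rw [mem_Icc] at *; omega
    · intro a ha; rw [mem_Icc] at *; omega
    · intro a ha; rw [mem_Icc] at ha; omega
    · intro a ha; rw [mem_Icc] at ha; omega
    · intro a ha; rfl
  have hS2 : (∑ k ∈ Icc L (n-L), (1:ℝ)/((n-k-1:ℕ):ℝ)^2) ≤ 1/((L:ℝ)-2) := by
    rw [hS2eq]
    have := sum_inv_sq_le (L-1) (by omega) (n-1-L)
    have hcast : ((L-1:ℕ):ℝ) - 1 = (L:ℝ) - 2 := by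
      rw [Nat.cast_sub (by omega)]; push_cast; ring
    rwa [hcast] at this
  have hS : (∑ k ∈ Icc L (n-L), ((1:ℝ)/(k:ℝ)^2 + (1:ℝ)/((n-k-1:ℕ):ℝ)^2)) ≤ 2/9 := by
    rw [Finset.sum_add_distrib]
    have h1 : 1/((L:ℝ)-1) ≤ 1/10 := by
      apply one_div_le_one_div_of_le <;> linarith
    have h2 : 1/((L:ℝ)-2) ≤ 1/9 := by
      apply one_div_le_one_div_of_le <;> linarith
    linarith
  have hCpos : (0:ℝ) ≤ (2.9:ℝ)^(n-1) * (4/((n:ℝ)-1)^2) := by positivity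
  calc b n ≤ ∑ k ∈ Icc L (n-L), b k * b (n-k-1) := hrec n hsmall
    _ ≤ ∑ k ∈ Icc L (n-L),
        ((2.9:ℝ)^(n-1) * (4/((n:ℝ)-1)^2)) * ((1:ℝ)/(k:ℝ)^2 + (1:ℝ)/((n-k-1:ℕ):ℝ)^2) :=
        Finset.sum_le_sum hterm
    _ = ((2.9:ℝ)^(n-1) * (4/((n:ℝ)-1)^2)) *
        ∑ k ∈ Icc L (n-L), ((1:ℝ)/(k:ℝ)^2 + (1:ℝ)/((n-k-1:ℕ):ℝ)^2) := by
        rw [Finset.mul_sum]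
    _ ≤ ((2.9:ℝ)^(n-1) * (4/((n:ℝ)-1)^2)) * (2/9) :=
        mul_le_mul_of_nonneg_left hS hCpos
    _ ≤ (2.9:ℝ)^n / (n:ℝ)^2 := by
        have hpowsplit : (2.9:ℝ)^n = (2.9:ℝ)^(n-1) * 2.9 := by
          rw [← pow_succ]
          congr 1
          omega
        rw [hpowsplit]
        have hpow : (0:ℝ) < (2.9:ℝ)^(n-1) := by positivity
        have key : (4/((n:ℝ)-1)^2) * (2/9) ≤ 2.9 / (n:ℝ)^2 := by
          rw [div_mul_div_comm, div_le_div_iff₀ (by nlinarith) (by positivity)]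
          nlinarith
        calc (2.9:ℝ)^(n-1) * (4/((n:ℝ)-1)^2) * (2/9)
            = (2.9:ℝ)^(n-1) * ((4/((n:ℝ)-1)^2) * (2/9)) := by ring
          _ ≤ (2.9:ℝ)^(n-1) * (2.9 / (n:ℝ)^2) := mul_le_mul_of_nonneg_left key (le_of_lt hpow)
          _ = (2.9:ℝ)^(n-1) * 2.9 / (n:ℝ)^2 := by ring
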